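/- For the constant marginal m ≡ v with v ∈ (0,1], the minimizers of soft-Dice SD_m over M are exactly the c ∈ M with SD_m(c) = 1 − 2v/(1+v): since m(ω) = v > D*/2 = v/(1+v) for all ω (as v < 1 + v), the unique minimizer (up to null sets) is c ≡ 1, which has volume 1 while ‖m‖₁ = v; hence soft-Dice exhibits volume bias of factor 1/v for constant marginals. -/
import Mathlib


open MeasureTheory Filter

noncomputable section

/-- The unit cube `[0,1]^n`. -/
def cube (n : ℕ) : Set (Fin n → ℝ) := Set.univ.pi fun _ => Set.Icc (0:ℝ) 1

/-- The (normalized) Lebesgue measure on the unit cube. -/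
def lam (n : ℕ) : Measure (Fin n → ℝ) := volume.restrict (cube n)

/-- The `L¹`-volume `‖f‖₁ = ∫ f dλ` (for nonnegative `f`). -/
def vol1 (n : ℕ) (f : (Fin n → ℝ) → ℝ) : ℝ := ∫ ω, f ω ∂(lam n)

/-- The Dice score `D_m(s) = 2∫ s·m dλ / (‖s‖₁ + ‖m‖₁)`. -/
def Dice (n : ℕ) (m s : (Fin n → ℝ) → ℝ) : ℝ :=
  2 * (∫ ω, s ω * m ω ∂(lam n)) / (vol1 n s + vol1 n m)

/-- The soft-Dice loss `SD_m(c) = 1 - 2∫ c·m dλ / (‖c‖₁ + ‖m‖₁)`. -/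
def softDice (n : ℕ) (m c : (Fin n → ℝ) → ℝ) : ℝ :=
  1 - 2 * (∫ ω, c ω * m ω ∂(lam n)) / (vol1 n c + vol1 n m)

/-- Membership in `M`: measurable with values in `[0,1]`. -/
def MemM (n : ℕ) (m : (Fin n → ℝ) → ℝ) : Prop :=
  Measurable m ∧ ∀ ω, m ω ∈ Set.Icc (0:ℝ) 1

/-- Membership in `S`: measurable with values in `{0,1}`. -/
def MemS (n : ℕ) (s : (Fin n → ℝ) → ℝ) : Prop :=
  Measurable s ∧ ∀ ω, s ω = 0 ∨ s ω = 1

/-- The set of soft-Dice values over `M`. -/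
def SDvals (n : ℕ) (m : (Fin n → ℝ) → ℝ) : Set ℝ :=
  {x : ℝ | ∃ c, MemM n c ∧ x = softDice n m c}

/-- The set of Dice values over `S`. -/
def Dvals (n : ℕ) (m : (Fin n → ℝ) → ℝ) : Set ℝ :=
  {x : ℝ | ∃ s, MemS n s ∧ x = Dice n m s}


lemma cube_volume (n : ℕ) : volume (cube n) = 1 := by
  rw [cube, volume_pi_pi]
  simp

instance lamProb (n : ℕ) : IsProbabilityMeasure (lam n) :=
  ⟨by rw [lam, Measure.restrict_apply_univ, cube_volume]⟩

lemma memM_integrable {n : ℕ} {c : (Fin n → ℝ) → ℝ} (hc : MemM n c) :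
    Integrable c (lam n) := by
  refine Integrable.mono' (integrable_const 1) hc.1.aestronglyMeasurable ?_
  filter_upwards with ω
  rw [Real.norm_eq_abs, abs_of_nonneg (hc.2 ω).1]
  exact (hc.2 ω).2

lemma vol1_nonneg {n : ℕ} {c : (Fin n → ℝ) → ℝ} (hc : MemM n c) : 0 ≤ vol1 n c :=
  integral_nonneg fun ω => (hc.2 ω).1

lemma vol1_le_one {n : ℕ} {c : (Fin n → ℝ) → ℝ} (hc : MemM n c) : vol1 n c ≤ 1 := by
  have h := integral_mono (memM_integrable hc) (integrable_const 1)
    (fun ω => (hc.2 ω).2)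
  simpa [vol1] using h

lemma softDice_const {n : ℕ} (v : ℝ) (c : (Fin n → ℝ) → ℝ) :
    softDice n (fun _ => v) c = 1 - 2 * (vol1 n c * v) / (vol1 n c + v) := by
  have h1 : (∫ ω, c ω * v ∂(lam n)) = vol1 n c * v := integral_mul_const v c
  have h2 : vol1 n (fun _ : Fin n → ℝ => v) = v := by simp [vol1]
  rw [softDice, h1, h2]

lemma key_ineq {v V : ℝ} (hv : 0 < v) (hV0 : 0 ≤ V) (hV1 : V ≤ 1) :
    1 - 2 * v / (1 + v) ≤ 1 - 2 * (V * v) / (V + v) := by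
  have h1 : 0 < V + v := by linarith
  have h2 : 0 < 1 + v := by linarith
  rw [sub_le_sub_iff_left, div_le_div_iff₀ h1 h2]
  nlinarith [mul_nonneg (sub_nonneg.mpr hV1) (sq_nonneg v), mul_nonneg hv.le (sub_nonneg.mpr hV1)]

lemma key_eq {v V : ℝ} (hv : 0 < v) (hV0 : 0 ≤ V) (hV1 : V ≤ 1) :
    1 - 2 * (V * v) / (V + v) = 1 - 2 * v / (1 + v) ↔ V = 1 := by
  have h1 : V + v ≠ 0 := by positivity
  have h2 : (1:ℝ) + v ≠ 0 := by positivity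
  constructor
  · intro h
    have h' : 2 * (V * v) / (V + v) = 2 * v / (1 + v) := by linarith
    field_simp at h'
    have hvv : V * v ^ 2 = v ^ 2 := by nlinarith
    exact mul_right_cancel₀ (pow_ne_zero 2 hv.ne') (by linarith [hvv])
  · rintro rfl
    rw [one_mul]

theorem constant_marginal_soft_dice_minimizer
    (n : ℕ) (v : ℝ) (hv : v ∈ Set.Ioc (0:ℝ) 1) :
    sInf (SDvals n (fun _ => v)) = 1 - 2 * v / (1 + v) ∧
    ∀ c : (Fin n → ℝ) → ℝ, MemM n c →
      (softDice n (fun _ => v) c = 1 - 2 * v / (1 + v) ↔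
        ∀ᵐ ω ∂(lam n), c ω = 1) := by
  obtain ⟨hv0, hv1⟩ := hv
  have hone : MemM n (fun _ : Fin n → ℝ => (1:ℝ)) :=
    ⟨measurable_const, fun ω => ⟨zero_le_one, le_refl 1⟩⟩
  have hvone : vol1 n (fun _ : Fin n → ℝ => (1:ℝ)) = 1 := by simp [vol1]
  have hval1 : softDice n (fun _ => v) (fun _ : Fin n → ℝ => (1:ℝ)) = 1 - 2 * v / (1 + v) := by
    rw [softDice_const, hvone, one_mul]
  have hmem : (1 - 2 * v / (1 + v)) ∈ SDvals n (fun _ => v) :=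
    ⟨_, hone, hval1.symm⟩
  have hlb : ∀ x ∈ SDvals n (fun _ => v), 1 - 2 * v / (1 + v) ≤ x := by
    rintro x ⟨c, hc, rfl⟩
    rw [softDice_const]
    exact key_ineq hv0 (vol1_nonneg hc) (vol1_le_one hc)
  constructor
  · exact le_antisymm (csInf_le ⟨_, hlb⟩ hmem) (le_csInf ⟨_, hmem⟩ hlb)
  · intro c hc
    rw [softDice_const, key_eq hv0 (vol1_nonneg hc) (vol1_le_one hc)]
    constructor
    · intro hV
      rw [vol1] at hV
      have h0 : (∫ ω, (1 - c ω) ∂(lam n)) = 0 := by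
        rw [integral_sub (integrable_const 1) (memM_integrable hc), hV]
        simp
      have hae := (integral_eq_zero_iff_of_nonneg
        (fun ω => sub_nonneg.mpr (hc.2 ω).2)
        ((integrable_const 1).sub (memM_integrable hc))).mp h0
      filter_upwards [hae] with ω hω
      have : 1 - c ω = 0 := hω
      linarith
    · intro hae
      rw [vol1]
      have h : (∫ ω, c ω ∂(lam n)) = ∫ _ω, (1:ℝ) ∂(lam n) := integral_congr_ae hae
      rw [h]
      simp
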